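/- Consider the single-parameter nonlinear transform model: y_1,…,y_n i.i.d. with density p(y|θ) = N(y; f(θ), σ²) for a known constant σ > 0, where f : ℝ → ℝ is continuous and the model is identifiable in the sense that θ ≠ θ0 implies f(θ) ≠ f(θ0); the prior is p(θ) = N(θ; m_θ, s_θ²) with s_θ > 0. If μ_n is, for each n, a maximizer over ℝ of θ ↦ Σ_{i=1}^n ln p(y_i|θ) + ln p(θ), then μ_n → θ0 in probability (under the law with parameter θ0). -/

import Mathlib

open MeasureTheory ProbabilityTheory Filter Real

set_option maxHeartbeats 1000000

namespace MapAux

lemma vne {s : ℝ} (hs : 0 < s) : (⟨s^2, sq_nonneg s⟩ : NNReal) ≠ 0 := by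
  intro h
  have : s^2 = 0 := congrArg Subtype.val h
  nlinarith

lemma log_gaussianPDFReal {s : ℝ} (hs : 0 < s) (m x : ℝ) :
    Real.log (gaussianPDFReal m ⟨s^2, sq_nonneg s⟩ x)
      = -Real.log (Real.sqrt (2 * π * s^2)) - (x - m)^2 / (2 * s^2) := by
  change Real.log ((Real.sqrt (2 * π * s^2))⁻¹ * Real.exp (-(x - m)^2 / (2 * s^2))) = _
  have h1 : (Real.sqrt (2 * π * s^2))⁻¹ ≠ 0 := by
    simp only [ne_eq, inv_eq_zero]
    positivity
  rw [Real.log_mul h1 (Real.exp_ne_zero _), Real.log_inv, Real.log_exp]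
  ring

-- centered pdf shift
lemma pdf_shift {v : NNReal} (m x : ℝ) :
    gaussianPDFReal m v x = gaussianPDFReal 0 v (x - m) := by
  simp [gaussianPDFReal]

lemma pdf0_eq {v : NNReal} (hv : v ≠ 0) :
    gaussianPDFReal 0 v = fun x => (Real.sqrt (2 * π * v))⁻¹ * Real.exp (-(2 * (v:ℝ))⁻¹ * x^2) := by
  funext x
  have hv' : (0:ℝ) < v := lt_of_le_of_ne v.coe_nonneg (by exact_mod_cast hv.symm)
  rw [gaussianPDFReal]
  congr 1
  rw [sub_zero]
  field_simp

lemma integrable_mul_pdf0 {v : NNReal} (hv : v ≠ 0) :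
    Integrable (fun x => x * gaussianPDFReal 0 v x) := by
  have hv' : (0:ℝ) < v := lt_of_le_of_ne v.coe_nonneg (by exact_mod_cast hv.symm)
  have hb : (0:ℝ) < (2 * (v:ℝ))⁻¹ := by positivity
  rw [pdf0_eq hv]
  have := (integrable_mul_exp_neg_mul_sq hb).const_mul (Real.sqrt (2 * π * v))⁻¹
  exact this.congr (by filter_upwards with x; ring)

lemma integral_mul_pdf0 {v : NNReal} (hv : v ≠ 0) :
    ∫ x, x * gaussianPDFReal 0 v x = 0 := by
  have hodd : ∀ x, (-x) * gaussianPDFReal 0 v (-x) = -(x * gaussianPDFReal 0 v x) := by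
    intro x
    have : gaussianPDFReal 0 v (-x) = gaussianPDFReal 0 v x := by
      simp [gaussianPDFReal]
    rw [this]; ring
  have h := integral_neg_eq_self (fun x => x * gaussianPDFReal 0 v x) (volume : Measure ℝ)
  simp only [hodd, integral_neg] at h
  linarith


lemma integrable_sq_pdf0 {v : NNReal} (hv : v ≠ 0) :
    Integrable (fun x => x^2 * gaussianPDFReal 0 v x) := by
  have hv' : (0:ℝ) < v := lt_of_le_of_ne v.coe_nonneg (by exact_mod_cast hv.symm)
  have hb : (0:ℝ) < (2 * (v:ℝ))⁻¹ := by positivity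
  rw [pdf0_eq hv]
  have h2 : Integrable (fun x : ℝ => x ^ 2 * Real.exp (-(2 * (v:ℝ))⁻¹ * x^2)) := by
    have := integrable_rpow_mul_exp_neg_mul_sq hb (s := 2) (by norm_num)
    refine this.congr ?_
    filter_upwards with x
    rw [show ((2:ℝ) = ((2:ℕ):ℝ)) by norm_num, Real.rpow_natCast]
  have := h2.const_mul (Real.sqrt (2 * π * v))⁻¹
  exact this.congr (by filter_upwards with x; ring)

lemma integrable_quad_pdf0 {v : NNReal} (hv : v ≠ 0) (a b c : ℝ) :
    Integrable (fun x => (a * x^2 + b * x + c) * gaussianPDFReal 0 v x) := by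
  have h1 := (integrable_sq_pdf0 hv).const_mul a
  have h2 := (integrable_mul_pdf0 hv).const_mul b
  have h3 := (integrable_gaussianPDFReal 0 v).const_mul c
  refine ((h1.add h2).add h3).congr ?_
  filter_upwards with x
  simp only [Pi.add_apply]
  ring

lemma integrable_sq_sub_pdf {v : NNReal} (hv : v ≠ 0) (m : ℝ) :
    Integrable (fun x => x^2 * gaussianPDFReal m v x) := by
  have h := (integrable_quad_pdf0 hv 1 (2*m) (m^2)).comp_sub_right m
  refine h.congr ?_
  filter_upwards with x
  rw [pdf_shift m x]
  ring_nf

lemma integrable_mul_pdf {v : NNReal} (hv : v ≠ 0) (m : ℝ) :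
    Integrable (fun x => x * gaussianPDFReal m v x) := by
  have h := (integrable_quad_pdf0 hv 0 1 m).comp_sub_right m
  refine h.congr ?_
  filter_upwards with x
  rw [pdf_shift m x]
  ring_nf

lemma integral_mul_pdf {v : NNReal} (hv : v ≠ 0) (m : ℝ) :
    ∫ x, x * gaussianPDFReal m v x = m := by
  have key : (fun x => x * gaussianPDFReal m v x)
      = fun x => ((x - m) * gaussianPDFReal 0 v (x - m)) + m * gaussianPDFReal m v x := by
    funext x; rw [← pdf_shift m x]; ring
  rw [key, integral_add ?_ ?_]
  · have h1 : ∫ x, (x - m) * gaussianPDFReal 0 v (x - m) = ∫ x, x * gaussianPDFReal 0 v x := by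
      exact integral_sub_right_eq_self (fun x => x * gaussianPDFReal 0 v x) m
    rw [h1, integral_mul_pdf0 hv, integral_const_mul, integral_gaussianPDFReal_eq_one m hv]
    ring
  · exact (integrable_mul_pdf0 hv).comp_sub_right m
  · exact (integrable_gaussianPDFReal m v).const_mul m

lemma gaussianReal_withDensity (m : ℝ) {v : NNReal} (hv : v ≠ 0) :
    gaussianReal m v
      = (volume : Measure ℝ).withDensity (fun x => ENNReal.ofReal (gaussianPDFReal m v x)) := by
  rw [gaussianReal_of_var_ne_zero m hv]
  rfl

lemma integrable_gaussianReal_iff (m : ℝ) {v : NNReal} (hv : v ≠ 0) (g : ℝ → ℝ) :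
    Integrable g (gaussianReal m v)
      ↔ Integrable (fun x => g x * gaussianPDFReal m v x) := by
  rw [gaussianReal_withDensity m hv]
  rw [integrable_withDensity_iff]
  · constructor <;> intro h <;> refine h.congr ?_ <;> filter_upwards with x <;>
      rw [ENNReal.toReal_ofReal (gaussianPDFReal_nonneg m v x)]
  · exact (measurable_gaussianPDFReal m v).ennreal_ofReal
  · filter_upwards with x using ENNReal.ofReal_lt_top

lemma integral_gaussianReal (m : ℝ) {v : NNReal} (hv : v ≠ 0) (g : ℝ → ℝ) :
    ∫ x, g x ∂(gaussianReal m v) = ∫ x, g x * gaussianPDFReal m v x := by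
  rw [gaussianReal_withDensity m hv]
  have hmeas : Measurable (fun x => (gaussianPDFReal m v x).toNNReal) :=
    (measurable_gaussianPDFReal m v).real_toNNReal
  have : (fun x => ENNReal.ofReal (gaussianPDFReal m v x))
      = fun x => ((gaussianPDFReal m v x).toNNReal : ENNReal) := rfl
  rw [this, integral_withDensity_eq_integral_smul hmeas]
  congr 1
  funext x
  rw [NNReal.smul_def, smul_eq_mul, Real.coe_toNNReal _ (gaussianPDFReal_nonneg m v x)]
  ring

lemma integral_id_gaussianReal (m : ℝ) {v : NNReal} (hv : v ≠ 0) :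
    ∫ x, x ∂(gaussianReal m v) = m := by
  rw [integral_gaussianReal m hv (fun x => x), integral_mul_pdf hv m]

lemma memLp_two_id_gaussianReal (m : ℝ) {v : NNReal} (hv : v ≠ 0) :
    MemLp (id : ℝ → ℝ) 2 (gaussianReal m v) := by
  rw [memLp_two_iff_integrable_sq aestronglyMeasurable_id]
  have := (integrable_gaussianReal_iff m hv (fun x => x^2)).2 (integrable_sq_sub_pdf hv m)
  exact this.congr (by filter_upwards with x; simp [Pi.pow_apply])


lemma sum_chebyshev {Ω : Type*} [MeasurableSpace Ω] (P : Measure Ω) [IsProbabilityMeasure P]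
    (c : ℝ) {v : NNReal} (hv : v ≠ 0)
    (y : ℕ → Ω → ℝ) (hmeas : ∀ i, Measurable (y i))
    (hindep : iIndepFun y P)
    (hlaw : ∀ i, Measure.map (y i) P = gaussianReal c v) :
    ∃ V : ℝ, 0 ≤ V ∧ ∀ n : ℕ, ∀ t : ℝ, 0 < t →
      P {ω | t ≤ |∑ i ∈ Finset.range n, (y i ω - c)|}
        ≤ ENNReal.ofReal ((n : ℝ) * V / t^2) := by
  set Z : ℕ → Ω → ℝ := fun i ω => y i ω - c with hZ
  have hyL2 : ∀ i, MemLp (y i) 2 P := by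
    intro i
    have h0 : MemLp (id : ℝ → ℝ) 2 (Measure.map (y i) P) := by
      rw [hlaw i]; exact memLp_two_id_gaussianReal c hv
    exact (memLp_map_measure_iff aestronglyMeasurable_id (hmeas i).aemeasurable).1 h0
  have hZL2 : ∀ i, MemLp (Z i) 2 P := fun i => (hyL2 i).sub (memLp_const c)
  have hEy : ∀ i, ∫ ω, y i ω ∂P = c := by
    intro i
    have h0 : ∫ x, x ∂(Measure.map (y i) P) = c := by
      rw [hlaw i]; exact integral_id_gaussianReal c hv
    have h1 := integral_map (φ := y i) (μ := P) (hmeas i).aemeasurable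
      (f := fun x : ℝ => x) aestronglyMeasurable_id
    rw [← h1]
    exact h0
  have hEZ : ∀ i, ∫ ω, Z i ω ∂P = 0 := by
    intro i
    rw [hZ]
    rw [integral_sub ((hyL2 i).integrable one_le_two) (integrable_const c)]
    simp [hEy i]
  set V : ℝ := ∫ x, (x - c)^2 ∂(gaussianReal c v) with hV
  have hEZsq : ∀ i, ∫ ω, (Z i ω)^2 ∂P = V := by
    intro i
    rw [hV, ← hlaw i,
      integral_map (hmeas i).aemeasurable
        (Continuous.aestronglyMeasurable (by continuity))]
  have hVar : ∀ i, variance (Z i) P = V := by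
    intro i
    rw [variance_eq_sub (hZL2 i)]
    have h1 : ∫ ω, (Z i ^ 2) ω ∂P = V := by
      simpa [Pi.pow_apply] using hEZsq i
    rw [h1, hEZ i]
    ring
  have hVnonneg : 0 ≤ V := (hVar 0) ▸ variance_nonneg _ _
  refine ⟨V, hVnonneg, fun n t ht => ?_⟩
  have hpair : Set.Pairwise ↑(Finset.range n) fun i j => IndepFun (Z i) (Z j) P := by
    intro i _ j _ hij
    exact (hindep.indepFun hij).comp (measurable_id.sub measurable_const)
      (measurable_id.sub measurable_const)
  have hVarS : variance (∑ i ∈ Finset.range n, Z i) P = (n : ℝ) * V := by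
    rw [IndepFun.variance_sum (fun i _ => hZL2 i) hpair]
    simp [hVar, Finset.sum_const, Finset.card_range, nsmul_eq_mul]
  have hES : ∫ ω, (∑ i ∈ Finset.range n, Z i) ω ∂P = 0 := by
    have : ∫ ω, ∑ i ∈ Finset.range n, Z i ω ∂P = 0 := by
      rw [integral_finset_sum _ (fun i _ => (hZL2 i).integrable one_le_two)]
      simp [hEZ]
    simpa [Finset.sum_apply] using this
  have hcheb := meas_ge_le_variance_div_sq
    (memLp_finset_sum' _ (fun i (_ : i ∈ Finset.range n) => hZL2 i)) ht
  rw [hVarS] at hcheb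
  have hsets : {ω | t ≤ |∑ i ∈ Finset.range n, (y i ω - c)|}
      = {ω | t ≤ |(∑ i ∈ Finset.range n, Z i) ω - ∫ x, (∑ i ∈ Finset.range n, Z i) x ∂P|} := by
    ext ω
    rw [Set.mem_setOf_eq, Set.mem_setOf_eq, hES, sub_zero, Finset.sum_apply]
  rw [hsets]
  exact hcheb


lemma exists_delta (f : ℝ → ℝ) (hf : Continuous f) (θ0 : ℝ)
    (hident : ∀ θ, θ ≠ θ0 → f θ ≠ f θ0) {ε : ℝ} (hε : 0 < ε) (mθ M : ℝ) :
    ∃ δ > 0, ∀ θ, ε ≤ |θ - θ0| → |θ - mθ| ≤ M → δ ≤ |f θ - f θ0| := by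
  set K : Set ℝ := {θ | ε ≤ |θ - θ0|} ∩ {θ | |θ - mθ| ≤ M} with hKdef
  rcases K.eq_empty_or_nonempty with hKe | hKne
  · refine ⟨1, one_pos, fun θ h1 h2 => ?_⟩
    have : θ ∈ K := ⟨h1, h2⟩
    rw [hKe] at this
    exact absurd this (Set.notMem_empty θ)
  · have habs1 : Continuous fun θ : ℝ => |θ - θ0| :=
      (continuous_id.sub continuous_const).abs
    have habs2 : Continuous fun θ : ℝ => |θ - mθ| :=
      (continuous_id.sub continuous_const).abs
    have hKclosed : IsClosed K :=
      (isClosed_le continuous_const habs1).inter (isClosed_le habs2 continuous_const)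
    have hKsub : K ⊆ Metric.closedBall mθ M := by
      intro θ hθ
      rw [Metric.mem_closedBall, Real.dist_eq]
      exact hθ.2
    have hKcomp : IsCompact K :=
      (isCompact_closedBall mθ M).of_isClosed_subset hKclosed hKsub
    have hg : ContinuousOn (fun θ => |f θ - f θ0|) K :=
      ((hf.sub continuous_const).abs).continuousOn
    obtain ⟨θs, hθsK, hmin⟩ := hKcomp.exists_isMinOn hKne hg
    refine ⟨|f θs - f θ0|, ?_, fun θ h1 h2 => hmin (Set.mem_inter h1 h2)⟩
    rw [gt_iff_lt, abs_pos, sub_ne_zero]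
    apply hident
    intro hcon
    have := hθsK.1
    rw [hcon] at this
    simp at this
    linarith



lemma key_ineq {σ sθ : ℝ} (hσ : 0 < σ) (hsθ : 0 < sθ) (mθ θ0 μ a b : ℝ) (n : ℕ) (yv : ℕ → ℝ)
    (h : (∑ i ∈ Finset.range n, Real.log (gaussianPDFReal a ⟨σ^2, sq_nonneg σ⟩ (yv i)))
          + Real.log (gaussianPDFReal mθ ⟨sθ^2, sq_nonneg sθ⟩ θ0)
        ≤ (∑ i ∈ Finset.range n, Real.log (gaussianPDFReal b ⟨σ^2, sq_nonneg σ⟩ (yv i)))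
          + Real.log (gaussianPDFReal mθ ⟨sθ^2, sq_nonneg sθ⟩ μ)) :
    (n : ℝ) * (b - a)^2 * sθ^2
        - 2 * (b - a) * (∑ i ∈ Finset.range n, (yv i - a)) * sθ^2
        + σ^2 * (μ - mθ)^2
      ≤ σ^2 * (θ0 - mθ)^2 := by
  simp only [log_gaussianPDFReal hσ, log_gaussianPDFReal hsθ] at h
  rw [Finset.sum_sub_distrib, Finset.sum_sub_distrib, Finset.sum_const, Finset.card_range,
    ← Finset.sum_div, ← Finset.sum_div] at h
  set s0 : ℝ := ∑ i ∈ Finset.range n, (yv i - a)^2 with hs0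
  set s1 : ℝ := ∑ i ∈ Finset.range n, (yv i - b)^2 with hs1
  set S : ℝ := ∑ i ∈ Finset.range n, (yv i - a) with hS
  have hexp : s1 = s0 - 2*(b - a)*S + (n : ℝ)*(b - a)^2 := by
    rw [hs1]
    have : ∀ i ∈ Finset.range n,
        (yv i - b)^2 = (yv i - a)^2 - 2*(b - a)*(yv i - a) + (b - a)^2 := by
      intro i _; ring
    rw [Finset.sum_congr rfl this, Finset.sum_add_distrib, Finset.sum_sub_distrib,
      ← Finset.mul_sum, Finset.sum_const, Finset.card_range, nsmul_eq_mul, ← hS, ← hs0]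
  have h2 : s1/(2*σ^2) + (μ - mθ)^2/(2*sθ^2) ≤ s0/(2*σ^2) + (θ0 - mθ)^2/(2*sθ^2) := by
    linarith
  have hσ2 : (0:ℝ) < σ^2 := by positivity
  have hsθ2 : (0:ℝ) < sθ^2 := by positivity
  have h4 : 0 ≤ ((s0/(2*σ^2) + (θ0 - mθ)^2/(2*sθ^2))
      - (s1/(2*σ^2) + (μ - mθ)^2/(2*sθ^2))) * (2*σ^2*sθ^2) :=
    mul_nonneg (by linarith) (by positivity)
  have h5 : 0 ≤ (s0 - s1)*sθ^2 + ((θ0 - mθ)^2 - (μ - mθ)^2)*σ^2 := by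
    have e : ((s0/(2*σ^2) + (θ0 - mθ)^2/(2*sθ^2))
        - (s1/(2*σ^2) + (μ - mθ)^2/(2*sθ^2))) * (2*σ^2*sθ^2)
        = (s0 - s1)*sθ^2 + ((θ0 - mθ)^2 - (μ - mθ)^2)*σ^2 := by
      field_simp
      ring
    rwa [e] at h4
  nlinarith [h5, hexp]

lemma det_cases {σ sθ δ a : ℝ} (hσ : 0 < σ) (hsθ : 0 < sθ) (hδ0 : 0 < δ) (ha0 : 0 < a)
    {C0 : ℝ} (n : ℕ) (d S u M : ℝ)
    (hkey : (n:ℝ) * d^2 * sθ^2 - 2*d*S*sθ^2 + σ^2*u^2 ≤ C0)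
    (hM2 : σ^2*M^2 = C0 + a*sθ^2) (hMnn : 0 ≤ M)
    (hnb1 : 2*C0 < (n:ℝ)*(δ^2*sθ^2))
    (hcase : (δ ≤ |d| ∧ |u| ≤ M) ∨ M < |u|) :
    (n:ℝ)*δ/4 ≤ |S| ∨ Real.sqrt ((n:ℝ)*a) ≤ |S| := by
  have hsθ2 : (0:ℝ) < sθ^2 := by positivity
  have hdS : d * S ≤ |d| * |S| := le_trans (le_abs_self _) (le_of_eq (abs_mul d S))
  have hnn : (0:ℝ) ≤ (n:ℝ) := Nat.cast_nonneg n
  rcases hcase with ⟨hδd, _⟩ | hMu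
  · left
    by_contra hcon
    push_neg at hcon
    have hd2 : δ^2 ≤ d^2 := by
      nlinarith [mul_self_le_mul_self hδ0.le hδd, sq_abs d]
    have e2 : |d| * |S| ≤ |d| * ((n:ℝ)*δ/4) :=
      mul_le_mul_of_nonneg_left hcon.le (abs_nonneg d)
    have e3 : |d| * δ ≤ d^2 := by
      nlinarith [mul_le_mul_of_nonneg_left hδd (abs_nonneg d), sq_abs d]
    nlinarith [hkey, mul_le_mul_of_nonneg_right e2 hsθ2.le,
      mul_le_mul_of_nonneg_right e3 (mul_nonneg hnn hsθ2.le),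
      mul_le_mul_of_nonneg_right hdS hsθ2.le,
      mul_le_mul_of_nonneg_right hd2 (mul_nonneg hnn hsθ2.le),
      mul_nonneg (sq_nonneg σ) (sq_nonneg u)]
  · right
    have hMu2 : σ^2*M^2 ≤ σ^2*u^2 := by
      have h0 : M^2 ≤ u^2 := by nlinarith [mul_self_le_mul_self hMnn hMu.le, sq_abs u]
      nlinarith [sq_nonneg σ]
    have h6 : ((n:ℝ) * d^2 + a) * sθ^2 ≤ 2*d*S*sθ^2 := by nlinarith
    have h7 : (n:ℝ)*d^2 + a ≤ 2*d*S := by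
      have := le_of_mul_le_mul_right h6 hsθ2
      linarith
    have hdne : d ≠ 0 := by
      intro h
      rw [h] at h7
      nlinarith [mul_nonneg hnn (sq_nonneg d)]
    have hdpos : 0 < |d| := abs_pos.mpr hdne
    set p := Real.sqrt (n:ℝ) with hp
    set q := Real.sqrt a with hq
    have hp2 : p^2 = (n:ℝ) := Real.sq_sqrt hnn
    have hq2 : q^2 = a := Real.sq_sqrt ha0.le
    have hpq : Real.sqrt ((n:ℝ)*a) = p * q := Real.sqrt_mul hnn a
    have hAM : 2 * (p*q) * |d| ≤ (n:ℝ)*d^2 + a := by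
      nlinarith [sq_nonneg (p * |d| - q), sq_abs d]
    have h8 : 2 * |d| * (p*q) ≤ 2 * |d| * |S| := by nlinarith
    rw [hpq]
    exact le_of_mul_le_mul_left h8 (by positivity)

end MapAux


/-- Consistency of the MAP (= single-parameter variational Laplace) estimator
in the nonlinear transform model `p(y|θ) = N(y; f(θ), σ²)` with Gaussian prior
`N(θ; m_θ, s_θ²)`: if `f` is continuous and identifiable (`θ ≠ θ0 → f θ ≠ f θ0`), then any
sequence of maximizers `μₙ` of the log joint density converges in probability to `θ0`. -/
theorem single_param_map_consistent
    {Ω : Type*} [MeasurableSpace Ω] (P : Measure Ω) [IsProbabilityMeasure P]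
    (f : ℝ → ℝ) (hf : Continuous f)
    (θ0 σ : ℝ) (hσ : 0 < σ)
    (hident : ∀ θ, θ ≠ θ0 → f θ ≠ f θ0)
    (mθ sθ : ℝ) (hsθ : 0 < sθ)
    -- i.i.d. observations with law `N(f(θ0), σ²)`
    (y : ℕ → Ω → ℝ) (hmeas : ∀ i, Measurable (y i))
    (hindep : iIndepFun y P)
    (hlaw : ∀ i, Measure.map (y i) P = gaussianReal (f θ0) ⟨σ ^ 2, sq_nonneg σ⟩)
    -- `μₙ` maximizes `θ ↦ ∑ᵢ ln p(yᵢ|θ) + ln p(θ)`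
    (μn : ℕ → Ω → ℝ)
    (hmax : ∀ n ω θ,
      (∑ i ∈ Finset.range n,
          Real.log (gaussianPDFReal (f θ) ⟨σ ^ 2, sq_nonneg σ⟩ (y i ω)))
        + Real.log (gaussianPDFReal mθ ⟨sθ ^ 2, sq_nonneg sθ⟩ θ)
      ≤ (∑ i ∈ Finset.range n,
          Real.log (gaussianPDFReal (f (μn n ω)) ⟨σ ^ 2, sq_nonneg σ⟩ (y i ω)))
        + Real.log (gaussianPDFReal mθ ⟨sθ ^ 2, sq_nonneg sθ⟩ (μn n ω))) :
    -- conclusion: `μₙ → θ0` in probability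
    ∀ ε > 0, Tendsto (fun n => P {ω | ε < |μn n ω - θ0|}) atTop (nhds 0) := by
  intro ε hε
  have hv : (⟨σ^2, sq_nonneg σ⟩ : NNReal) ≠ 0 := MapAux.vne hσ
  obtain ⟨V, hV0, hcheb⟩ := MapAux.sum_chebyshev P (f θ0) hv y hmeas hindep hlaw
  have key : ∀ (n : ℕ) (ω : Ω), (n:ℝ) * (f (μn n ω) - f θ0)^2 * sθ^2
      - 2*(f (μn n ω) - f θ0) * (∑ i ∈ Finset.range n, (y i ω - f θ0)) * sθ^2
      + σ^2 * (μn n ω - mθ)^2 ≤ σ^2 * (θ0 - mθ)^2 :=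
    fun n ω => MapAux.key_ineq hσ hsθ mθ θ0 (μn n ω) (f θ0) (f (μn n ω)) n
      (fun i => y i ω) (hmax n ω θ0)
  rw [ENNReal.tendsto_atTop_zero]
  intro η hη
  obtain ⟨r, hr0, hrη⟩ : ∃ r : ℝ, 0 < r ∧ ENNReal.ofReal r ≤ η := by
    rcases eq_or_ne η ⊤ with h | h
    · exact ⟨1, one_pos, by simp [h]⟩
    · exact ⟨η.toReal, ENNReal.toReal_pos hη.ne' h, by rw [ENNReal.ofReal_toReal h]⟩
  set C0 : ℝ := σ^2 * (θ0 - mθ)^2 with hC0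
  have hC0nn : 0 ≤ C0 := by positivity
  set a : ℝ := 2*V/r + 1 with ha
  have ha0 : 0 < a := by positivity
  set M : ℝ := Real.sqrt ((C0 + a * sθ^2)/σ^2) with hM
  have hM2 : σ^2 * M^2 = C0 + a * sθ^2 := by
    rw [hM, Real.sq_sqrt (by positivity)]
    field_simp
  have hMnn : 0 ≤ M := Real.sqrt_nonneg _
  obtain ⟨δ, hδ0, hδ⟩ := MapAux.exists_delta f hf θ0 hident hε mθ M
  obtain ⟨N1, hN1⟩ := exists_nat_ge (2*C0/(δ^2*sθ^2))
  obtain ⟨N2, hN2⟩ := exists_nat_ge (32*V/(r*δ^2))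
  refine ⟨N1 + N2 + 1, fun n hn => ?_⟩
  have hn1 : 1 ≤ n := le_trans (by omega) hn
  have hn1' : (1:ℝ) ≤ n := by exact_mod_cast hn1
  have hnb1 : 2*C0 < (n:ℝ)*(δ^2*sθ^2) := by
    have h1 : (N1:ℝ) < n := by exact_mod_cast (by omega : N1 < n)
    have h2 : 2*C0/(δ^2*sθ^2) < (n:ℝ) := lt_of_le_of_lt hN1 h1
    have hpos : (0:ℝ) < δ^2*sθ^2 := by positivity
    rw [div_lt_iff₀ hpos] at h2
    linarith
  have hnb2 : 32*V ≤ (n:ℝ)*(r*δ^2) := by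
    have h1 : (N2:ℝ) ≤ n := by exact_mod_cast (by omega : N2 ≤ n)
    have h2 : 32*V/(r*δ^2) ≤ (n:ℝ) := le_trans hN2 h1
    have hpos : (0:ℝ) < r*δ^2 := by positivity
    rw [div_le_iff₀ hpos] at h2
    linarith
  have hsθ2 : (0:ℝ) < sθ^2 := by positivity
  -- event inclusion
  have hsub : {ω | ε < |μn n ω - θ0|}
      ⊆ {ω | (n:ℝ)*δ/4 ≤ |∑ i ∈ Finset.range n, (y i ω - f θ0)|}
        ∪ {ω | Real.sqrt ((n:ℝ)*a) ≤ |∑ i ∈ Finset.range n, (y i ω - f θ0)|} := by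
    intro ω hω
    simp only [Set.mem_setOf_eq] at hω
    have hcase : (δ ≤ |f (μn n ω) - f θ0| ∧ |μn n ω - mθ| ≤ M) ∨ M < |μn n ω - mθ| := by
      by_cases hMc : |μn n ω - mθ| ≤ M
      · exact Or.inl ⟨hδ (μn n ω) hω.le hMc, hMc⟩
      · exact Or.inr (lt_of_not_ge hMc)
    have hres := MapAux.det_cases hσ hsθ hδ0 ha0 n (f (μn n ω) - f θ0)
      (∑ i ∈ Finset.range n, (y i ω - f θ0)) (μn n ω - mθ) M (key n ω) hM2 hMnn hnb1 hcase
    rcases hres with h | h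
    · exact Or.inl h
    · exact Or.inr h
  -- measure bound
  have hbound1 : P {ω | (n:ℝ)*δ/4 ≤ |∑ i ∈ Finset.range n, (y i ω - f θ0)|}
      ≤ ENNReal.ofReal (r/2) := by
    have ht : (0:ℝ) < (n:ℝ)*δ/4 := by positivity
    refine le_trans (hcheb n _ ht) (ENNReal.ofReal_le_ofReal ?_)
    rw [div_le_iff₀ (by positivity)]
    have : ((n:ℝ)*δ/4)^2 = (n:ℝ)^2*δ^2/16 := by ring
    rw [this]
    nlinarith [hnb2, hn1', hV0, hr0, hδ0]
  have hbound2 : P {ω | Real.sqrt ((n:ℝ)*a) ≤ |∑ i ∈ Finset.range n, (y i ω - f θ0)|}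
      ≤ ENNReal.ofReal (r/2) := by
    have hna : (0:ℝ) < (n:ℝ)*a := by positivity
    have ht : (0:ℝ) < Real.sqrt ((n:ℝ)*a) := Real.sqrt_pos.mpr hna
    refine le_trans (hcheb n _ ht) (ENNReal.ofReal_le_ofReal ?_)
    rw [Real.sq_sqrt hna.le]
    have he : (n:ℝ)*V/((n:ℝ)*a) = V/a := by
      rw [mul_div_mul_left _ _ (by positivity : (n:ℝ) ≠ 0)]
    rw [he, div_le_iff₀ ha0]
    have : (r/2)*a = V + r/2 := by
      rw [ha]
      field_simp
    linarith
  calc P {ω | ε < |μn n ω - θ0|}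
      ≤ P ({ω | (n:ℝ)*δ/4 ≤ |∑ i ∈ Finset.range n, (y i ω - f θ0)|}
          ∪ {ω | Real.sqrt ((n:ℝ)*a) ≤ |∑ i ∈ Finset.range n, (y i ω - f θ0)|}) :=
        measure_mono hsub
    _ ≤ P {ω | (n:ℝ)*δ/4 ≤ |∑ i ∈ Finset.range n, (y i ω - f θ0)|}
          + P {ω | Real.sqrt ((n:ℝ)*a) ≤ |∑ i ∈ Finset.range n, (y i ω - f θ0)|} :=
        measure_union_le _ _
    _ ≤ ENNReal.ofReal (r/2) + ENNReal.ofReal (r/2) := add_le_add hbound1 hbound2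
    _ = ENNReal.ofReal r := by
        rw [← ENNReal.ofReal_add (by positivity) (by positivity)]
        norm_num
    _ ≤ η := hrη
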